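/- Let (R,m) be a one-dimensional Cohen–Macaulay Noetherian local ring with infinite residue field, I an m-primary ideal with μ(I) = e(R) − 1, and (x) a minimal reduction of m. If s is the smallest integer with mI^s = xI^s, then ℓ(mI^n/xI^n) = 1 for 1 ≤ n ≤ s−1, mI^n = xI^n for n ≥ s, and the Hilbert series of F(I) is (1 + (e(R) − 2)λ + λ^s)/(1 − λ). -/

import Mathlib

open IsLocalRing

/-- The length of a module, as the Krull dimension of its lattice of submodules. -/
noncomputable def modLength (R M : Type*) [Ring R] [AddCommGroup M] [Module R M] :
    WithBot ℕ∞ :=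
  Order.krullDim (Submodule R M)

/-- The length `ℓ(P/N)` of the subquotient `P/N` of `R` determined by ideals `N ≤ P`. -/
noncomputable def qlen {R : Type*} [CommRing R] (N P : Ideal R) : WithBot ℕ∞ :=
  modLength R (↥P ⧸ (Submodule.comap P.subtype N))

/-- A Noetherian local ring is Cohen–Macaulay if some system of parameters
is a regular sequence. -/
def IsCMLocal (R : Type*) [CommRing R] [IsLocalRing R] : Prop :=
  ∃ rs : List R, RingTheory.Sequence.IsRegular R rs ∧
    (Ideal.span {x | x ∈ rs}).radical = maximalIdeal R ∧
    (rs.length : WithBot ℕ∞) = ringKrullDim R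


open Order

set_option linter.unusedSectionVars false


section LatticeSplit

variable {α : Type*} [Lattice α] [IsModularLattice α]

lemma exists_chain_pair (a : α) : ∀ (n : ℕ) (p : LTSeries α), p.length = n →
    ∃ (q : LTSeries {x : α // x ≤ a}) (r : LTSeries {x : α // a ≤ x}),
      q.last = ⟨p.last ⊓ a, inf_le_right⟩ ∧ r.last = ⟨p.last ⊔ a, le_sup_right⟩ ∧
      p.length ≤ q.length + r.length := by
  intro n
  induction n with
  | zero =>
    intro p hp
    exact ⟨RelSeries.singleton _ ⟨p.last ⊓ a, inf_le_right⟩,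
      RelSeries.singleton _ ⟨p.last ⊔ a, le_sup_right⟩, rfl, rfl, by simp [hp]⟩
  | succ n ih =>
    intro p hp
    obtain ⟨q, r, hq, hr, hlen⟩ := ih p.eraseLast (by simp [hp])
    have hne : p.length ≠ 0 := by omega
    have hlt : p.eraseLast.last < p.last := p.eraseLast_last_rel_last hne
    have hel : p.eraseLast.length = n := by simp [hp]
    have hminf : p.eraseLast.last ⊓ a ≤ p.last ⊓ a := inf_le_inf_right a hlt.le
    have hmsup : p.eraseLast.last ⊔ a ≤ p.last ⊔ a := sup_le_sup_right hlt.le a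
    rcases hminf.lt_or_eq with h1 | h1
    · -- extend q
      have hq' : q.last < (⟨p.last ⊓ a, inf_le_right⟩ : {x : α // x ≤ a}) := by
        rw [hq]; exact h1
      rcases hmsup.lt_or_eq with h2 | h2
      · have hr' : r.last < (⟨p.last ⊔ a, le_sup_right⟩ : {x : α // a ≤ x}) := by
          rw [hr]; exact h2
        exact ⟨q.snoc _ hq', r.snoc _ hr', by simp, by simp,
          by simp only [RelSeries.snoc_length]; omega⟩
      · refine ⟨q.snoc _ hq', r, by simp, ?_, by simp only [RelSeries.snoc_length]; omega⟩
        rw [hr]; exact Subtype.ext h2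
    · -- inf equal, sup strict
      have h2 : p.eraseLast.last ⊔ a < p.last ⊔ a :=
        sup_lt_sup_of_lt_of_inf_le_inf hlt (le_of_eq h1.symm)
      have hr' : r.last < (⟨p.last ⊔ a, le_sup_right⟩ : {x : α // a ≤ x}) := by
        rw [hr]; exact h2
      refine ⟨q, r.snoc _ hr', ?_, by simp, by simp only [RelSeries.snoc_length]; omega⟩
      rw [hq]; exact Subtype.ext h1

lemma krullDim_le_add (a : α) :
    krullDim α ≤ krullDim {x : α // x ≤ a} + krullDim {x : α // a ≤ x} := by
  have : Nonempty α := ⟨a⟩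
  have n1 : Nonempty {x : α // x ≤ a} := ⟨⟨a, le_refl a⟩⟩
  have n2 : Nonempty {x : α // a ≤ x} := ⟨⟨a, le_refl a⟩⟩
  rw [krullDim_eq_iSup_length (α := α), krullDim_eq_iSup_length (α := {x : α // x ≤ a}),
    krullDim_eq_iSup_length (α := {x : α // a ≤ x}), ← WithBot.coe_add, WithBot.coe_le_coe]
  refine iSup_le fun p => ?_
  obtain ⟨q, r, _, _, h⟩ := exists_chain_pair a p.length p rfl
  calc (p.length : ℕ∞) ≤ (q.length : ℕ∞) + (r.length : ℕ∞) := by exact_mod_cast h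
    _ ≤ _ := add_le_add (le_iSup (fun p : LTSeries {x : α // x ≤ a} => (p.length : ℕ∞)) q)
        (le_iSup (fun p : LTSeries {x : α // a ≤ x} => (p.length : ℕ∞)) r)

lemma add_le_krullDim (a : α) :
    krullDim {x : α // x ≤ a} + krullDim {x : α // a ≤ x} ≤ krullDim α := by
  have : Nonempty α := ⟨a⟩
  have n1 : Nonempty {x : α // x ≤ a} := ⟨⟨a, le_refl a⟩⟩
  have n2 : Nonempty {x : α // a ≤ x} := ⟨⟨a, le_refl a⟩⟩
  rw [krullDim_eq_iSup_length (α := α), krullDim_eq_iSup_length (α := {x : α // x ≤ a}),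
    krullDim_eq_iSup_length (α := {x : α // a ≤ x}), ← WithBot.coe_add, WithBot.coe_le_coe]
  rw [ENat.iSup_add]
  refine iSup_le fun q => ?_
  rw [ENat.add_iSup]
  refine iSup_le fun r => ?_
  -- map into α
  have hvq : StrictMono (fun x : {x : α // x ≤ a} => (x : α)) := fun _ _ h => h
  have hvr : StrictMono (fun x : {x : α // a ≤ x} => (x : α)) := fun _ _ h => h
  set q' : LTSeries α := q.map _ hvq with hq'def
  set r' : LTSeries α := r.map _ hvr with hr'def
  have hle : q'.last ≤ r'.head := by
    have h1 : q'.last = (q.last : α) := q.last_map _ hvq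
    have h2 : r'.head = (r.head : α) := r.head_map _ hvr
    rw [h1, h2]
    exact le_trans q.last.2 r.head.2
  rcases eq_or_lt_of_le hle with heq | hlt
  · calc ((q.length : ℕ∞) + r.length) = ((q'.smash r' heq).length : ℕ∞) := by
          simp [RelSeries.smash_length, hq'def, hr'def]
      _ ≤ _ := by
          have h := LTSeries.length_le_krullDim (q'.smash r' heq)
          rw [krullDim_eq_iSup_length (α := α)] at h
          exact_mod_cast h
  · have h := LTSeries.length_le_krullDim (q'.append r' hlt)
    rw [krullDim_eq_iSup_length (α := α)] at h
    have h' : ((q'.append r' hlt).length : ℕ∞) ≤ ⨆ (p : LTSeries α), (p.length : ℕ∞) := by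
      exact_mod_cast h
    refine le_trans ?_ h'
    have : (q'.append r' hlt).length = q'.length + r'.length + 1 := by
      simp [RelSeries.append]
    rw [this]
    have hq'l : q'.length = q.length := rfl
    have hr'l : r'.length = r.length := rfl
    rw [hq'l, hr'l]
    exact_mod_cast Nat.le_succ _

end LatticeSplit

section ModLength

variable {R M N : Type*} [Ring R] [AddCommGroup M] [Module R M] [AddCommGroup N] [Module R N]

lemma modLength_congr (e : M ≃ₗ[R] N) : modLength R M = modLength R N :=
  krullDim_eq_of_orderIso (Submodule.orderIsoMapComap e)

lemma modLength_nonneg : 0 ≤ modLength R M :=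
  krullDim_nonneg

lemma modLength_ne_bot : modLength R M ≠ ⊥ := by
  intro h
  exact absurd (h ▸ modLength_nonneg (R := R) (M := M)) (by simp)

lemma modLength_eq_zero_of_subsingleton [Subsingleton M] : modLength R M = 0 := by
  have : Subsingleton (Submodule R M) := by
    constructor
    intro a b
    ext x
    have : x = 0 := Subsingleton.elim x 0
    simp [this]
  exact le_antisymm (krullDim_nonpos_of_subsingleton) modLength_nonneg

lemma one_le_modLength_of_nontrivial [Nontrivial M] : 1 ≤ modLength R M := by
  obtain ⟨x, hx⟩ := exists_ne (0 : M)
  have hbt : (⊥ : Submodule R M) < ⊤ := by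
    refine lt_of_le_of_ne le_top ?_
    intro h
    have : x ∈ (⊥ : Submodule R M) := h ▸ Submodule.mem_top
    exact hx (Submodule.mem_bot R |>.mp this)
  have := LTSeries.length_le_krullDim ((RelSeries.singleton _ (⊥ : Submodule R M)).snoc ⊤ hbt)
  change ((1 : ℕ) : WithBot ℕ∞) ≤ _ at this
  simpa [modLength] using this

lemma modLength_eq_zero_iff : modLength R M = 0 ↔ Subsingleton M := by
  constructor
  · intro h
    by_contra hs
    have : Nontrivial M := not_subsingleton_iff_nontrivial.mp hs
    have := one_le_modLength_of_nontrivial (R := R) (M := M)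
    rw [h] at this
    norm_num at this
  · intro _
    exact modLength_eq_zero_of_subsingleton

/-- Additivity of module length along a submodule. -/
lemma modLength_add (W : Submodule R M) :
    modLength R M = modLength R ↥W + modLength R (M ⧸ W) := by
  have h1 : modLength R ↥W = krullDim {p' : Submodule R M // p' ≤ W} :=
    krullDim_eq_of_orderIso (Submodule.MapSubtype.orderIso W)
  have h2 : modLength R (M ⧸ W) = krullDim {p' : Submodule R M // W ≤ p'} :=
    krullDim_eq_of_orderIso (Submodule.comapMkQRelIso W)
  rw [h1, h2]
  exact le_antisymm (krullDim_le_add W) (add_le_krullDim W)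

end ModLength

section Qlen

variable {R : Type*} [CommRing R]

lemma qlen_nonneg (N P : Ideal R) : 0 ≤ qlen N P := modLength_nonneg

lemma qlen_ne_bot (N P : Ideal R) : qlen N P ≠ ⊥ := modLength_ne_bot

lemma comap_subtype_eq_top_iff {N P : Ideal R} : Submodule.comap P.subtype N = ⊤ ↔ P ≤ N := by
  constructor
  · intro ht x hx
    exact (Submodule.mem_comap.mp (ht ▸ Submodule.mem_top (x := (⟨x, hx⟩ : ↥P))))
  · intro h
    ext ⟨x, hx⟩
    simpa using h hx

lemma qlen_eq_zero_iff {N P : Ideal R} (h : N ≤ P) : qlen N P = 0 ↔ N = P := by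
  rw [qlen, modLength_eq_zero_iff, Submodule.Quotient.subsingleton_iff,
    comap_subtype_eq_top_iff]
  exact ⟨fun h2 => le_antisymm h h2, fun he => he.ge⟩

/-- Additivity of `qlen` along a chain of ideals. -/
lemma qlen_add {N P Q : Ideal R} (hNP : N ≤ P) (hPQ : P ≤ Q) :
    qlen N Q = qlen N P + qlen P Q := by
  set NQ := Submodule.comap Q.subtype N with hNQdef
  set PQ := Submodule.comap Q.subtype P with hPQdef
  have hle : NQ ≤ PQ := fun x hx => hNP hx
  -- second piece: ((Q/N) / (P/N)) ≃ Q/P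
  have e2 : (((↥Q) ⧸ NQ) ⧸ (PQ.map NQ.mkQ)) ≃ₗ[R] ((↥Q) ⧸ PQ) :=
    Submodule.quotientQuotientEquivQuotient NQ PQ hle
  -- first piece: P/N ≃ W
  set g : ↥PQ →ₗ[R] ((↥Q) ⧸ NQ) := NQ.mkQ.comp PQ.subtype with hgdef
  have hrange : LinearMap.range g = PQ.map NQ.mkQ := by
    rw [hgdef, LinearMap.range_comp, Submodule.range_subtype]
  have hker : LinearMap.ker g = Submodule.comap PQ.subtype NQ := by
    rw [hgdef, LinearMap.ker_comp, Submodule.ker_mkQ]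
  have e1a : (↥PQ ⧸ Submodule.comap PQ.subtype NQ) ≃ₗ[R] ↥(PQ.map NQ.mkQ) :=
    (Submodule.quotEquivOfEq _ _ hker.symm).trans
      ((LinearMap.quotKerEquivRange g).trans (LinearEquiv.ofEq _ _ hrange))
  -- P/N directly
  have hmapP : (Submodule.comap PQ.subtype NQ).map
      ((Submodule.comapSubtypeEquivOfLe hPQ : ↥PQ ≃ₗ[R] ↥P) : ↥PQ →ₗ[R] ↥P) =
      Submodule.comap P.subtype N := by
    ext y
    simp only [Submodule.mem_map, Submodule.mem_comap, Submodule.subtype_apply]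
    constructor
    · rintro ⟨z, hzN, hze⟩
      have hc2 : ((Submodule.comapSubtypeEquivOfLe hPQ z : ↥P) : R) = ((z : ↥Q) : R) :=
        Submodule.comapSubtypeEquivOfLe_apply_coe hPQ z
      have hc : ((z : ↥Q) : R) = (y : R) := by
        rw [← hc2]; exact congrArg Subtype.val hze
      rw [← hc]
      exact hzN
    · intro hrN
      refine ⟨⟨⟨(y : R), hPQ y.2⟩, y.2⟩, by exact hrN, ?_⟩
      apply Subtype.ext
      exact Submodule.comapSubtypeEquivOfLe_apply_coe hPQ (⟨⟨(y : R), hPQ y.2⟩, y.2⟩ : ↥PQ)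
  have e1 : (↥P ⧸ Submodule.comap P.subtype N) ≃ₗ[R] ↥(PQ.map NQ.mkQ) :=
    (Submodule.Quotient.equiv (Submodule.comap PQ.subtype NQ)
      (Submodule.comap P.subtype N) (Submodule.comapSubtypeEquivOfLe hPQ) hmapP).symm.trans e1a
  rw [qlen, qlen, qlen, modLength_add (PQ.map NQ.mkQ), ← modLength_congr e1,
    modLength_congr e2]

lemma qlen_top (N : Ideal R) : qlen N ⊤ = modLength R (R ⧸ N) := by
  refine modLength_congr (Submodule.Quotient.equiv _ _ (Submodule.topEquiv) ?_)
  ext r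
  simp only [Submodule.mem_map, Submodule.mem_comap]
  constructor
  · rintro ⟨⟨x, _⟩, hxN, rfl⟩
    exact hxN
  · intro hr
    exact ⟨⟨r, trivial⟩, hr, rfl⟩

/-- Multiplication by a nonzerodivisor preserves lengths of subquotients. -/
lemma qlen_smul {N P : Ideal R} (hNP : N ≤ P) {x : R} (hx : x ∈ nonZeroDivisors R) :
    qlen (Ideal.span {x} * N) (Ideal.span {x} * P) = qlen N P := by
  have hxmem : ∀ (J : Ideal R) (a : R), a ∈ J → x * a ∈ Ideal.span {x} * J := by
    intro J a ha
    exact Ideal.mul_mem_mul (Ideal.subset_span rfl) ha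
  set φ : ↥P →ₗ[R] ↥(Ideal.span {x} * P) :=
    { toFun := fun a => ⟨x * a, hxmem P a a.2⟩
      map_add' := by intro a b; ext; simp [mul_add]
      map_smul' := by intro c a; ext; simp; ring } with hφdef
  have hinj : Function.Injective φ := by
    intro a b hab
    have h1 : x * (a : R) = x * (b : R) := congrArg Subtype.val hab
    have h0 : ((a : R) - (b : R)) * x = 0 := by ring_nf; linear_combination h1
    have := mem_nonZeroDivisors_iff_right.mp hx _ h0
    exact Subtype.ext (sub_eq_zero.mp this)
  have hsurj : Function.Surjective φ := by
    rintro ⟨z, hz⟩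
    obtain ⟨w, hw, rfl⟩ := Ideal.mem_span_singleton_mul.mp hz
    exact ⟨⟨w, hw⟩, rfl⟩
  set e : ↥P ≃ₗ[R] ↥(Ideal.span {x} * P) := LinearEquiv.ofBijective φ ⟨hinj, hsurj⟩ with hedef
  symm
  refine modLength_congr (Submodule.Quotient.equiv _ _ e ?_)
  ext ⟨z, hz⟩
  simp only [Submodule.mem_map, Submodule.mem_comap]
  constructor
  · rintro ⟨⟨a, haP⟩, haN, hae⟩
    have : x * a = z := congrArg Subtype.val hae
    subst this
    exact hxmem N a haN
  · intro hzN
    obtain ⟨w, hw, hwz⟩ := Ideal.mem_span_singleton_mul.mp hzN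
    refine ⟨⟨w, hNP hw⟩, hw, ?_⟩
    exact Subtype.ext hwz

end Qlen

section Fin

open IsLocalRing

variable {R : Type*} [CommRing R]

lemma withBot_add_ne_top {a b : WithBot ℕ∞} (ha : a ≠ ⊤) (hb : b ≠ ⊤) : a + b ≠ ⊤ := by
  cases a with
  | bot => simp
  | coe x =>
    cases b with
    | bot => simp
    | coe y =>
      rw [← WithBot.coe_add]
      intro h
      rw [← WithBot.coe_top, WithBot.coe_inj] at h
      rcases WithTop.add_eq_top.mp h with h' | h'
      · exact ha (by rw [h']; exact WithBot.coe_top)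
      · exact hb (by rw [h']; exact WithBot.coe_top)

lemma withBot_add_top_of_ne_bot {a : WithBot ℕ∞} (ha : a ≠ ⊥) : a + ⊤ = ⊤ := by
  cases a with
  | bot => simp at ha
  | coe x =>
    rw [← WithBot.coe_top, ← WithBot.coe_add, WithBot.coe_inj]
    exact WithTop.add_top x

lemma one_le_qlen_of_ne {N P : Ideal R} (h : N ≤ P) (hne : N ≠ P) : 1 ≤ qlen N P := by
  have h0 : qlen N P ≠ 0 := fun hq => hne ((qlen_eq_zero_iff h).mp hq)
  have hb : qlen N P ≠ ⊥ := qlen_ne_bot N P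
  cases hq : qlen N P with
  | bot => exact absurd hq hb
  | coe x =>
    rw [hq] at h0
    have : x ≠ 0 := by
      intro hx; apply h0; rw [hx]; rfl
    rw [show (1 : WithBot ℕ∞) = ((1 : ℕ∞) : WithBot ℕ∞) from rfl, WithBot.coe_le_coe]
    exact ENat.one_le_iff_ne_zero.mpr this

variable [IsLocalRing R]

/-- A cyclic subquotient `(N ⊔ (b))/N` with `m·b ⊆ N` has length at most one. -/
lemma qlen_le_one_of_cyclic {N P : Ideal R} (hNP : N ≤ P) (b : R) (hb : b ∈ P)
    (hspan : P ≤ N ⊔ Ideal.span {b}) (hmb : ∀ z ∈ maximalIdeal R, z * b ∈ N) :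
    qlen N P ≤ 1 := by
  set T := (↥P ⧸ (Submodule.comap P.subtype N)) with hT
  set β : T := Submodule.Quotient.mk ⟨b, hb⟩ with hβ
  have cl1 : ∀ t : T, ∃ c : R, t = c • β := by
    intro t
    obtain ⟨⟨p, hp⟩, rfl⟩ := Submodule.Quotient.mk_surjective _ t
    obtain ⟨n, hn, q, hq, hnq⟩ := Submodule.mem_sup.mp (hspan hp)
    obtain ⟨c, hc⟩ := Ideal.mem_span_singleton'.mp hq
    refine ⟨c, ?_⟩
    have hnP : n ∈ P := by
      have : n = p - c * b := by rw [← hnq, ← hc]; ring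
      rw [this]
      exact P.sub_mem hp (P.mul_mem_left c hb)
    have hsplit : (⟨p, hp⟩ : ↥P) = ⟨n, hnP⟩ + c • ⟨b, hb⟩ := by
      apply Subtype.ext
      simp [← hnq, hc]
    rw [hsplit, Submodule.Quotient.mk_add]
    have : Submodule.Quotient.mk (p := Submodule.comap P.subtype N) (⟨n, hnP⟩ : ↥P) = 0 :=
      (Submodule.Quotient.mk_eq_zero _).mpr hn
    rw [this, zero_add, Submodule.Quotient.mk_smul]
  have cl0 : ∀ c : R, c ∈ maximalIdeal R → c • β = 0 := by
    intro c hc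
    rw [hβ, ← Submodule.Quotient.mk_smul]
    apply (Submodule.Quotient.mk_eq_zero _).mpr
    show (c • (⟨b, hb⟩ : ↥P) : ↥P).1 ∈ N
    simpa using hmb c hc
  have cl2 : ∀ W : Submodule R T, W = ⊥ ∨ W = ⊤ := by
    intro W
    by_cases hW : W = ⊥
    · exact Or.inl hW
    right
    obtain ⟨t, htW, htne⟩ := Submodule.exists_mem_ne_zero_of_ne_bot hW
    obtain ⟨c, rfl⟩ := cl1 t
    have hcu : IsUnit c := by
      by_contra hcu
      exact htne (cl0 c ((IsLocalRing.mem_maximalIdeal c).mpr hcu))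
    have hβW : β ∈ W := by
      have h' : (((hcu.unit⁻¹ : Rˣ) : R) * c) • β ∈ W := by
        rw [mul_smul]
        exact Submodule.smul_mem W _ htW
      have hone : ((hcu.unit⁻¹ : Rˣ) : R) * c = 1 := by
        nth_rewrite 2 [← hcu.unit_spec]
        exact Units.inv_mul _
      rwa [hone, one_smul] at h'
    rw [Submodule.eq_top_iff']
    intro s
    obtain ⟨c', rfl⟩ := cl1 s
    exact Submodule.smul_mem W _ hβW
  -- now bound the Krull dimension
  have hlen : ∀ p : LTSeries (Submodule R T), p.length ≤ 1 := by
    intro p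
    by_contra hcon
    push_neg at hcon
    have h2 : 2 ≤ p.length := hcon
    have i0 : Fin (p.length + 1) := ⟨0, by omega⟩
    have i1 : Fin (p.length + 1) := ⟨1, by omega⟩
    have i2 : Fin (p.length + 1) := ⟨2, by omega⟩
    have h01 : p ⟨0, by omega⟩ < p ⟨1, by omega⟩ := p.strictMono (Fin.mk_lt_mk.mpr (by omega))
    have h12 : p ⟨1, by omega⟩ < p ⟨2, by omega⟩ := p.strictMono (Fin.mk_lt_mk.mpr (by omega))
    rcases cl2 (p ⟨1, by omega⟩) with hmid | hmid
    · rw [hmid] at h01; exact not_lt_bot h01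
    · rw [hmid] at h12; exact not_top_lt h12
  show modLength R T ≤ 1
  rw [modLength, Order.krullDim_eq_iSup_length]
  rw [show (1 : WithBot ℕ∞) = ((1 : ℕ∞) : WithBot ℕ∞) from rfl, WithBot.coe_le_coe]
  refine iSup_le fun p => ?_
  exact_mod_cast hlen p

end Fin

section Fin2

open IsLocalRing

variable {R : Type*} [CommRing R] [IsLocalRing R] [IsNoetherianRing R]

lemma withBot_natCast_ne_top (n : ℕ) : ((n : ℕ) : WithBot ℕ∞) ≠ ⊤ := by
  intro h
  rw [← WithBot.coe_natCast, ← WithBot.coe_top, WithBot.coe_inj] at h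
  exact (WithTop.natCast_ne_top n) h

lemma withBot_zero_ne_top : (0 : WithBot ℕ∞) ≠ ⊤ := by
  intro h
  exact withBot_natCast_ne_top 0 (by simpa using h)

lemma qlen_ne_top_of_smul_le {N P : Ideal R} (hNP : N ≤ P)
    (hm : maximalIdeal R * P ≤ N) : qlen N P ≠ ⊤ := by
  classical
  obtain ⟨S, hS⟩ := (isNoetherian_def.mp inferInstance P : P.FG)
  have key : ∀ S' : Finset R, (↑S' : Set R) ⊆ (P : Set R) →
      qlen N (N ⊔ Ideal.span ↑S') ≠ ⊤ := by
    intro S'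
    induction S' using Finset.induction_on with
    | empty =>
      intro _
      simp only [Finset.coe_empty, Ideal.span_empty, sup_bot_eq]
      rw [(qlen_eq_zero_iff le_rfl).mpr rfl]
      exact withBot_zero_ne_top
    | @insert a S'' ha ih =>
      intro hsub
      have hsub' : (↑S'' : Set R) ⊆ (P : Set R) := by
        intro z hz; exact hsub (by simp [hz])
      have haP : a ∈ P := hsub (by simp)
      set mid := N ⊔ Ideal.span ↑S'' with hmid
      have htop : N ⊔ Ideal.span ↑(insert a S'') = mid ⊔ Ideal.span {a} := by
        rw [hmid, Finset.coe_insert, Ideal.span_insert]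
        rw [sup_assoc, sup_comm (Ideal.span {a}) _]
      have hmidle : mid ≤ mid ⊔ Ideal.span {a} := le_sup_left
      have hq1 : qlen mid (mid ⊔ Ideal.span {a}) ≤ 1 := by
        refine qlen_le_one_of_cyclic hmidle a ?_ le_rfl ?_
        · exact Submodule.mem_sup_right (Ideal.subset_span rfl)
        · intro z hz
          have : z * a ∈ maximalIdeal R * P := Ideal.mul_mem_mul hz haP
          exact Ideal.mem_sup_left (hm this)
      have hchain : N ≤ mid := le_sup_left
      rw [htop, qlen_add hchain hmidle]
      refine withBot_add_ne_top (ih hsub') (fun h => ?_)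
      rw [h] at hq1
      have h1 := top_le_iff.mp hq1
      exact withBot_natCast_ne_top 1 (by exact_mod_cast h1)
  have hS' : Ideal.span (↑S : Set R) = P := hS
  have hfin := key S (Ideal.span_le.mp hS'.le)
  rwa [hS', sup_eq_right.mpr hNP] at hfin

lemma qlen_pow_top_ne_top : ∀ j : ℕ, qlen ((maximalIdeal R)^j) ⊤ ≠ ⊤ := by
  intro j
  induction j with
  | zero =>
    rw [pow_zero, Ideal.one_eq_top, (qlen_eq_zero_iff le_rfl).mpr rfl]
    exact withBot_zero_ne_top
  | succ j ih =>
    have hle : (maximalIdeal R)^(j+1) ≤ (maximalIdeal R)^j :=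
      Ideal.pow_le_pow_right (by omega)
    rw [qlen_add hle le_top]
    refine withBot_add_ne_top ?_ ih
    refine qlen_ne_top_of_smul_le hle ?_
    exact le_of_eq (pow_succ' _ _).symm

lemma qlen_top_ne_top {J : Ideal R} (hJ : ∃ k, (maximalIdeal R)^k ≤ J) :
    qlen J ⊤ ≠ ⊤ := by
  obtain ⟨k, hk⟩ := hJ
  have := qlen_pow_top_ne_top (R := R) k
  rw [qlen_add hk le_top] at this
  intro h
  rw [h, withBot_add_top_of_ne_bot (qlen_ne_bot _ _)] at this
  exact this rfl

/-- If a subquotient has length one then it is killed by the maximal ideal. -/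
lemma mul_le_of_qlen_eq_one {N P : Ideal R} (hNP : N ≤ P) (h1 : qlen N P = 1) :
    maximalIdeal R * P ≤ N := by
  set mid := N ⊔ maximalIdeal R * P with hmid
  have hNm : N ≤ mid := le_sup_left
  have hmP : mid ≤ P := sup_le hNP Ideal.mul_le_right
  have hadd := qlen_add hNm hmP
  rw [h1] at hadd
  have hmidP : mid ≠ P := by
    intro h
    have hPle : P ≤ N ⊔ (maximalIdeal R) • P := by
      rw [Ideal.smul_eq_mul, ← hmid, h]
    have hfg : P.FG := (isNoetherian_def.mp inferInstance P)
    have := Submodule.le_of_le_smul_of_le_jacobson_bot hfg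
      (IsLocalRing.maximalIdeal_le_jacobson ⊥) hPle
    have h0 : qlen N P = 0 := (qlen_eq_zero_iff hNP).mpr (le_antisymm hNP this)
    rw [h0] at h1
    exact absurd h1 (by norm_num)
  have h2 : 1 ≤ qlen mid P := one_le_qlen_of_ne hmP hmidP
  -- conclude qlen N mid = 0
  have hq0 : qlen N mid = 0 := by
    by_contra hne
    have hge : 1 ≤ qlen N mid := one_le_qlen_of_ne hNm (fun h => hne ((qlen_eq_zero_iff hNm).mpr h))
    have : (2 : WithBot ℕ∞) ≤ 1 := by
      calc (2 : WithBot ℕ∞) = 1 + 1 := by norm_num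
        _ ≤ qlen N mid + qlen mid P := add_le_add hge h2
        _ = 1 := hadd.symm
    norm_num at this
  have hNmid := (qlen_eq_zero_iff hNm).mp hq0
  have hfin : maximalIdeal R * P ≤ mid := le_sup_right
  rw [← hNmid] at hfin
  exact hfin

end Fin2

section Core

open IsLocalRing

lemma withBot_natCast_inj {a b : ℕ} :
    ((a : ℕ) : WithBot ℕ∞) = ((b : ℕ) : WithBot ℕ∞) ↔ a = b :=
  Nat.cast_inj

lemma exists_nat_of_ne_bot_top {a : WithBot ℕ∞} (h1 : a ≠ ⊥) (h2 : a ≠ ⊤) :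
    ∃ n : ℕ, a = ((n : ℕ) : WithBot ℕ∞) := by
  cases a with
  | bot => simp at h1
  | coe y =>
    have hy : y ≠ ⊤ := by
      rintro rfl
      exact h2 WithBot.coe_top
    obtain ⟨n, rfl⟩ := WithTop.ne_top_iff_exists.mp hy
    exact ⟨n, by exact_mod_cast rfl⟩

lemma withBot_solve {t : WithBot ℕ∞} {a b : ℕ} (ht : t ≠ ⊥)
    (h : t + ((a : ℕ) : WithBot ℕ∞) = ((b : ℕ) : WithBot ℕ∞)) :
    t = (((b - a : ℕ)) : WithBot ℕ∞) ∧ a ≤ b := by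
  have htop : t ≠ ⊤ := by
    intro hT
    rw [hT] at h
    have h2 : (⊤ : WithBot ℕ∞) + ((a : ℕ) : WithBot ℕ∞) = ⊤ := by
      rw [← WithBot.coe_top, ← WithBot.coe_natCast, ← WithBot.coe_add]
      norm_num
    rw [h2] at h
    exact withBot_natCast_ne_top b h.symm
  obtain ⟨k, rfl⟩ := exists_nat_of_ne_bot_top ht htop
  have hk : k + a = b := by
    rw [← withBot_natCast_inj]
    push_cast
    push_cast at h
    exact h
  constructor
  · rw [withBot_natCast_inj]; omega
  · omega

variable {R : Type*} [CommRing R] [IsLocalRing R] [IsNoetherianRing R]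
  (x : R) (hx : x ∈ maximalIdeal R) (hxreg : x ∈ nonZeroDivisors R)
  (I : Ideal R) (hprim : ∃ k, maximalIdeal R ^ k ≤ I)

-- basic inclusions
lemma xIn_le_In (n : ℕ) : Ideal.span {x} * I^n ≤ I^n := Ideal.mul_le_right

include hx in
lemma xIn_le_mIn (n : ℕ) : Ideal.span {x} * I^n ≤ maximalIdeal R * I^n := by
  apply Ideal.mul_mono_left
  rw [Ideal.span_le, Set.singleton_subset_iff]
  exact hx

lemma mIn_le_In (n : ℕ) : maximalIdeal R * I^n ≤ I^n := Ideal.mul_le_right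

include hprim in
lemma prim_pow (n : ℕ) : ∃ k, maximalIdeal R ^ k ≤ I ^ n := by
  obtain ⟨k, hk⟩ := hprim
  exact ⟨k * n, by rw [pow_mul]; exact Ideal.pow_right_mono hk n⟩

include hprim hxreg in
/-- `ℓ(Iⁿ/xIⁿ) = ℓ(R/xR)`. -/
lemma qlen_In_eq {e : ℕ} (he : modLength R (R ⧸ Ideal.span {x}) = ((e : ℕ) : WithBot ℕ∞))
    (n : ℕ) : qlen (Ideal.span {x} * I^n) (I^n) = ((e : ℕ) : WithBot ℕ∞) := by
  have hxle : Ideal.span {x} * I^n ≤ Ideal.span {x} := by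
    calc Ideal.span {x} * I^n ≤ Ideal.span {x} * ⊤ := Ideal.mul_mono_right le_top
      _ = Ideal.span {x} := Ideal.mul_top _
  have hsx : qlen (Ideal.span {x}) ⊤ = ((e : ℕ) : WithBot ℕ∞) := by
    rw [qlen_top]; exact he
  have hsmul : qlen (Ideal.span {x} * I^n) (Ideal.span {x}) = qlen (I^n) ⊤ := by
    have := qlen_smul (le_top : I^n ≤ ⊤) hxreg
    rwa [Ideal.mul_top] at this
  have chainA : qlen (Ideal.span {x} * I^n) ⊤ =
      qlen (Ideal.span {x} * I^n) (I^n) + qlen (I^n) ⊤ :=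
    qlen_add (xIn_le_In x I n) le_top
  have chainB : qlen (Ideal.span {x} * I^n) ⊤ =
      qlen (I^n) ⊤ + ((e : ℕ) : WithBot ℕ∞) := by
    rw [qlen_add hxle le_top, hsmul, hsx]
  -- extract the finite value of qlen (I^n) ⊤
  have hfin : qlen (I^n) ⊤ ≠ ⊤ := qlen_top_ne_top (prim_pow I hprim n)
  obtain ⟨f, hf⟩ := exists_nat_of_ne_bot_top (qlen_ne_bot _ _) hfin
  rw [hf] at chainA chainB
  rw [chainB] at chainA
  -- now: f + e = qlen … + f
  have hq : qlen (Ideal.span {x} * I^n) (I^n) + ((f : ℕ) : WithBot ℕ∞) =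
      (((f + e : ℕ)) : WithBot ℕ∞) := by
    rw [chainA.symm]
    push_cast
    ring
  obtain ⟨hval, _⟩ := withBot_solve (qlen_ne_bot _ _) hq
  rw [hval, withBot_natCast_inj.symm.mp rfl]
  congr 1
  omega

end Core

section Core2

open IsLocalRing

variable {R : Type*} [CommRing R] [IsLocalRing R] [IsNoetherianRing R]

/-- Main structural lemma: there are `μ* ∈ m`, `a* ∈ I` such that
`m Iⁿ = x Iⁿ + (μ* a* · a*ⁿ⁻¹)` for all `n ≥ 1`. -/
lemma main_structure {x : R} (hx : x ∈ maximalIdeal R) (hxreg : x ∈ nonZeroDivisors R)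
    {I : Ideal R} (hprim : ∃ k, maximalIdeal R ^ k ≤ I)
    {e : ℕ} (he : modLength R (R ⧸ Ideal.span {x}) = ((e : ℕ) : WithBot ℕ∞))
    (ht1 : qlen (Ideal.span {x} * I) (maximalIdeal R * I) = ((1 : ℕ) : WithBot ℕ∞)) :
    ∃ y : R, y ∈ maximalIdeal R * I ∧
      ∃ c : ℕ → R, (∀ n, c n ∈ I ^ n) ∧
      (∀ n : ℕ, 1 ≤ n → maximalIdeal R * I ^ n =
        Ideal.span {x} * I ^ n ⊔ Ideal.span {y * c (n-1)}) ∧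
      (∀ z ∈ maximalIdeal R, z * y ∈ Ideal.span {x} * I) := by
  -- x I ≤ m I
  have hxm : Ideal.span {x} * I ≤ maximalIdeal R * I := by
    have := xIn_le_mIn x hx I 1
    rwa [pow_one] at this
  -- m·(mI) ≤ xI
  have hkill : maximalIdeal R * (maximalIdeal R * I) ≤ Ideal.span {x} * I :=
    mul_le_of_qlen_eq_one hxm (by exact_mod_cast ht1)
  -- mI ≠ xI
  have hne : Ideal.span {x} * I ≠ maximalIdeal R * I := by
    intro h
    rw [(qlen_eq_zero_iff hxm).mpr h] at ht1
    have h10 : ((1:ℕ) : WithBot ℕ∞) = ((0:ℕ) : WithBot ℕ∞) := by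
      rw [← ht1]; norm_num
    exact one_ne_zero (withBot_natCast_inj.mp h10)
  -- find the product generator
  have hexists : ∃ μ ∈ maximalIdeal R, ∃ a ∈ I, μ * a ∉ Ideal.span {x} * I := by
    by_contra hcon
    push_neg at hcon
    have : maximalIdeal R * I ≤ Ideal.span {x} * I := Ideal.mul_le.mpr hcon
    exact hne (le_antisymm hxm this)
  obtain ⟨μ, hμ, a, ha, hya⟩ := hexists
  set y := μ * a with hy
  have hymem : y ∈ maximalIdeal R * I := Ideal.mul_mem_mul hμ ha
  -- mI = xI ⊔ (y)
  have hspanle : Ideal.span {x} * I ⊔ Ideal.span {y} ≤ maximalIdeal R * I :=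
    sup_le hxm ((Ideal.span_singleton_le_iff_mem _).mpr hymem)
  have hmid_ne : Ideal.span {x} * I ≠ Ideal.span {x} * I ⊔ Ideal.span {y} := by
    intro h
    exact hya (h ▸ Ideal.mem_sup_right (Ideal.subset_span rfl) : y ∈ Ideal.span {x} * I)
  have hmI : maximalIdeal R * I = Ideal.span {x} * I ⊔ Ideal.span {y} := by
    have hadd := qlen_add (le_sup_left : Ideal.span {x} * I ≤ _) hspanle
    rw [ht1] at hadd
    have h1 : 1 ≤ qlen (Ideal.span {x} * I) (Ideal.span {x} * I ⊔ Ideal.span {y}) :=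
      one_le_qlen_of_ne le_sup_left hmid_ne
    have h0 : qlen (Ideal.span {x} * I ⊔ Ideal.span {y}) (maximalIdeal R * I) = 0 := by
      by_contra hne0
      have h2 : 1 ≤ qlen (Ideal.span {x} * I ⊔ Ideal.span {y}) (maximalIdeal R * I) :=
        one_le_qlen_of_ne hspanle
          (fun h => hne0 ((qlen_eq_zero_iff hspanle).mpr h))
      have : (2 : WithBot ℕ∞) ≤ 1 := by
        calc (2 : WithBot ℕ∞) = 1 + 1 := by norm_num
          _ ≤ _ + _ := add_le_add h1 h2
          _ = ((1 : ℕ) : WithBot ℕ∞) := hadd.symm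
          _ = (1 : WithBot ℕ∞) := by norm_num
      norm_num at this
    exact ((qlen_eq_zero_iff hspanle).mp h0).symm
  -- the key identity
  have hkey : ∀ b ∈ I, ∃ d ∈ I, ∃ lam : R, y * b = x * (a * d) + lam * (y * a) := by
    intro b hb
    have hmem : μ * b ∈ maximalIdeal R * I := Ideal.mul_mem_mul hμ hb
    rw [hmI] at hmem
    obtain ⟨w, hw, cc, hcc, hwc⟩ := Submodule.mem_sup.mp hmem
    obtain ⟨d, hd, hdw⟩ := Ideal.mem_span_singleton_mul.mp hw
    obtain ⟨lam, hlam⟩ := Ideal.mem_span_singleton'.mp hcc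
    refine ⟨d, hd, lam, ?_⟩
    have : y * b = a * (μ * b) := by rw [hy]; ring
    rw [this, ← hwc, ← hdw, ← hlam]
    ring
  -- the induction
  refine ⟨y, hymem, fun n => a ^ n, fun n => Ideal.pow_mem_pow ha n, ?_, ?_⟩
  swap
  · intro z hz
    exact hkill (Ideal.mul_mem_mul hz hymem)
  intro n hn
  show maximalIdeal R * I ^ n = Ideal.span {x} * I ^ n ⊔ Ideal.span {y * a ^ (n-1)}
  induction n with
  | zero => omega
  | succ n ih =>
    rcases Nat.eq_or_lt_of_le hn with h1 | h1
    · -- n + 1 = 1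
      have : n = 0 := by omega
      subst this
      simpa [pow_one] using hmI
    · have hn1 : 1 ≤ n := by omega
      have ihh := ih hn1
      have hac : a * a ^ (n-1) = a ^ n := by
        rw [← pow_succ']
        congr 1
        omega
      have hsimp : n + 1 - 1 = n := by omega
      rw [hsimp]
      apply le_antisymm
      · -- forward inclusion
        have hstep : maximalIdeal R * I ^ (n+1) = (maximalIdeal R * I ^ n) * I := by
          rw [pow_succ, ← mul_assoc]
        rw [hstep, ihh, Submodule.sup_mul]
        apply sup_le
        · rw [mul_assoc, ← pow_succ]
          exact le_sup_left
        · rw [Ideal.mul_le]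
          intro r hr b hb
          obtain ⟨t, ht⟩ := Ideal.mem_span_singleton'.mp hr
          obtain ⟨d, hd, lam, hlam⟩ := hkey b hb
          have hval : (y * a ^ (n-1)) * b = x * (d * a ^ n) + lam * (y * a ^ n) := by
            have : (y * a ^ (n-1)) * b = (y * b) * a ^ (n-1) := by ring
            rw [this, hlam]
            rw [show (x * (a * d) + lam * (y * a)) * a ^ (n-1)
              = x * (d * (a * a ^ (n-1))) + lam * (y * (a * a ^ (n-1))) by ring, hac]
          have hmem : (y * a ^ (n-1)) * b ∈
              Ideal.span {x} * I ^ (n+1) ⊔ Ideal.span {y * a ^ n} := by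
            rw [hval]
            refine Submodule.add_mem _ (Ideal.mem_sup_left ?_) (Ideal.mem_sup_right ?_)
            · refine Ideal.mul_mem_mul (Ideal.subset_span rfl) ?_
              have : d * a ^ n ∈ I * I ^ n := Ideal.mul_mem_mul hd (Ideal.pow_mem_pow ha n)
              rwa [← pow_succ'] at this
            · exact Ideal.mul_mem_left _ lam (Ideal.subset_span rfl)
          have hrb : r * b = t * ((y * a ^ (n-1)) * b) := by rw [← ht]; ring
          rw [hrb]
          exact Ideal.mul_mem_left _ t hmem
      · -- backward inclusion
        apply sup_le
        · exact xIn_le_mIn x hx I (n+1)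
        · rw [Ideal.span_singleton_le_iff_mem]
          have : y * a ^ n = μ * a ^ (n+1) := by
            rw [hy, pow_succ']
            ring
          rw [this]
          exact Ideal.mul_mem_mul hμ (Ideal.pow_mem_pow ha (n+1))

end Core2

open PowerSeries in
/-- under the setup of Statement 4, if `μ(I) = e(R) − 1` and `s` is the smallest
integer with `mI^s = xI^s`, then `ℓ(mIⁿ/xIⁿ) = 1` for `1 ≤ n ≤ s − 1`, `mIⁿ = xIⁿ` for
`n ≥ s`, and the Hilbert series of `F(I)` is `(1 + (e(R) − 2)λ + λ^s)/(1 − λ)`. -/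
theorem stmt7 {R : Type*} [CommRing R] [IsLocalRing R] [IsNoetherianRing R]
    (hCM : IsCMLocal R) (hdim : ringKrullDim R = 1)
    (hres : Infinite (ResidueField R))
    (I : Ideal R) (hIm : I ≤ maximalIdeal R) (hprim : ∃ k, maximalIdeal R ^ k ≤ I)
    (x : R) (hx : x ∈ maximalIdeal R) (hxreg : x ∈ nonZeroDivisors R)
    (hred : ∃ N, ∀ n ≥ N, maximalIdeal R ^ (n + 1) = Ideal.span {x} * maximalIdeal R ^ n)
    (e : ℕ) (he : modLength R (R ⧸ Ideal.span {x}) = (e : WithBot ℕ∞))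
    (μ : ℕ → ℕ)
    (hμ : ∀ n : ℕ, qlen (maximalIdeal R * I ^ n) (I ^ n) = (μ n : WithBot ℕ∞))
    (hmin : μ 1 + 1 = e)
    (s : ℕ) (hs1 : 1 ≤ s)
    (hs : maximalIdeal R * I ^ s = Ideal.span {x} * I ^ s)
    (hsmin : ∀ n : ℕ, 1 ≤ n → n < s → maximalIdeal R * I ^ n ≠ Ideal.span {x} * I ^ n) :
    (∀ n : ℕ, 1 ≤ n → n ≤ s - 1 →
      qlen (Ideal.span {x} * I ^ n) (maximalIdeal R * I ^ n) = 1) ∧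
    (∀ n : ℕ, s ≤ n → maximalIdeal R * I ^ n = Ideal.span {x} * I ^ n) ∧
    PowerSeries.mk (fun n => (μ n : ℤ)) * (1 - X) =
      1 + C ((e : ℤ) - 2) * X + X ^ s := by
  -- the basic length equation, for every n : t n + μ n = e
  have heq : ∀ n : ℕ, qlen (Ideal.span {x} * I ^ n) (maximalIdeal R * I ^ n)
      + ((μ n : ℕ) : WithBot ℕ∞) = ((e : ℕ) : WithBot ℕ∞) := by
    intro n
    have h1 := qlen_In_eq x hxreg I hprim he n
    rw [qlen_add (xIn_le_mIn x hx I n) (mIn_le_In I n), hμ n] at h1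
    exact h1
  have hsolve : ∀ n : ℕ, qlen (Ideal.span {x} * I ^ n) (maximalIdeal R * I ^ n)
      = (((e - μ n : ℕ)) : WithBot ℕ∞) ∧ μ n ≤ e :=
    fun n => withBot_solve (qlen_ne_bot _ _) (heq n)
  -- t 1 = 1
  have hμ1 : μ 1 = e - 1 := by omega
  have ht1 : qlen (Ideal.span {x} * I) (maximalIdeal R * I) = ((1 : ℕ) : WithBot ℕ∞) := by
    have := (hsolve 1).1
    rw [pow_one] at this
    rw [this]
    congr 1
    omega
  -- the main structure
  obtain ⟨y, hymem, c, hc, hH, hzy⟩ := main_structure hx hxreg hprim he ht1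
  -- t n ≤ 1 for n ≥ 1
  have htle : ∀ n : ℕ, 1 ≤ n →
      qlen (Ideal.span {x} * I ^ n) (maximalIdeal R * I ^ n) ≤ 1 := by
    intro n hn
    have hII : I * I ^ (n-1) = I ^ n := by
      rw [← pow_succ']
      congr 1
      omega
    refine qlen_le_one_of_cyclic (xIn_le_mIn x hx I n) (y * c (n-1)) ?_ ?_ ?_
    · rw [hH n hn]
      exact Ideal.mem_sup_right (Ideal.subset_span rfl)
    · exact le_of_eq (hH n hn)
    · intro z hz
      have hmem : (z * y) * c (n-1) ∈ (Ideal.span {x} * I) * I ^ (n-1) :=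
        Ideal.mul_mem_mul (hzy z hz) (hc (n-1))
      rw [mul_assoc, hII] at hmem
      have : z * (y * c (n-1)) = (z * y) * c (n-1) := by ring
      rwa [this]
  -- values of μ
  have hval_ne : ∀ n : ℕ, 1 ≤ n → maximalIdeal R * I ^ n ≠ Ideal.span {x} * I ^ n →
      qlen (Ideal.span {x} * I ^ n) (maximalIdeal R * I ^ n) = 1 ∧ μ n = e - 1 := by
    intro n hn hne
    have hge : 1 ≤ qlen (Ideal.span {x} * I ^ n) (maximalIdeal R * I ^ n) :=
      one_le_qlen_of_ne (xIn_le_mIn x hx I n) (fun h => hne h.symm)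
    have hq1 : qlen (Ideal.span {x} * I ^ n) (maximalIdeal R * I ^ n) = 1 :=
      le_antisymm (htle n hn) hge
    refine ⟨hq1, ?_⟩
    have := (hsolve n).1
    rw [hq1] at this
    have h1 : (1 : ℕ) = e - μ n := by
      rw [← withBot_natCast_inj]
      exact_mod_cast this
    have := (hsolve n).2
    omega
  have hval_eqcase : ∀ n : ℕ, maximalIdeal R * I ^ n = Ideal.span {x} * I ^ n → μ n = e := by
    intro n h
    have h0 : qlen (Ideal.span {x} * I ^ n) (maximalIdeal R * I ^ n) = 0 :=
      (qlen_eq_zero_iff (xIn_le_mIn x hx I n)).mpr h.symm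
    have := heq n
    rw [h0, zero_add, withBot_natCast_inj] at this
    exact this
  -- part 2 : for n ≥ s
  have hpart2 : ∀ n : ℕ, s ≤ n → maximalIdeal R * I ^ n = Ideal.span {x} * I ^ n := by
    intro n hn
    induction n with
    | zero =>
      have : s = 0 := by omega
      omega
    | succ n ih =>
      rcases Nat.eq_or_lt_of_le hn with h1 | h1
      · rw [← h1]; exact hs
      · have hsn : s ≤ n := by omega
        have hihh := ih hsn
        rw [pow_succ, ← mul_assoc, hihh, mul_assoc, ← pow_succ, pow_succ, ← mul_assoc]
  -- μ 0 = 1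
  have hμ0 : μ 0 = 1 := by
    have h0 : qlen (maximalIdeal R * I ^ 0) (I ^ 0) = qlen (maximalIdeal R) ⊤ := by
      rw [pow_zero, Ideal.one_eq_top, Ideal.mul_top]
    have hle1 : qlen (maximalIdeal R) (⊤ : Ideal R) ≤ 1 := by
      refine qlen_le_one_of_cyclic le_top 1 trivial ?_ ?_
      · rw [Ideal.span_singleton_one]
        exact le_sup_right
      · intro z hz
        rwa [mul_one]
    have hge1 : 1 ≤ qlen (maximalIdeal R) (⊤ : Ideal R) :=
      one_le_qlen_of_ne le_top (Ideal.IsMaximal.ne_top (IsLocalRing.maximalIdeal.isMaximal R))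
    have h1 : qlen (maximalIdeal R) (⊤ : Ideal R) = 1 := le_antisymm hle1 hge1
    have := hμ 0
    rw [h0, h1] at this
    have : ((1 : ℕ) : WithBot ℕ∞) = ((μ 0 : ℕ) : WithBot ℕ∞) := by exact_mod_cast this
    exact (withBot_natCast_inj.mp this).symm
  -- s ≥ 2
  have hs2 : 2 ≤ s := by
    by_contra hcon
    have : s = 1 := by omega
    subst this
    have := hval_eqcase 1 hs
    omega
  -- μ values summary
  have hμval_lt : ∀ n : ℕ, 1 ≤ n → n < s → μ n = e - 1 := by
    intro n h1 h2
    exact (hval_ne n h1 (hsmin n h1 h2)).2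
  have hμval_ge : ∀ n : ℕ, s ≤ n → μ n = e := fun n hn => hval_eqcase n (hpart2 n hn)
  have he1 : 1 ≤ e := by omega
  refine ⟨?_, hpart2, ?_⟩
  · intro n h1 h2
    exact (hval_ne n h1 (hsmin n h1 (by omega))).1
  -- the power series identity
  · ext n
    rw [mul_sub, mul_one, map_sub, map_add, map_add]
    rw [PowerSeries.coeff_C_mul, PowerSeries.coeff_X, PowerSeries.coeff_one,
      PowerSeries.coeff_X_pow]
    rcases n with _ | n
    · -- n = 0
      rw [PowerSeries.coeff_zero_mul_X, PowerSeries.coeff_mk]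
      rw [if_pos rfl, if_neg (by omega : ¬ (0:ℕ) = 1), if_neg (by omega : ¬ (0:ℕ) = s)]
      rw [hμ0]
      push_cast
      ring
    · rw [PowerSeries.coeff_succ_mul_X, PowerSeries.coeff_mk, PowerSeries.coeff_mk]
      rw [if_neg (by omega : ¬ n + 1 = 0)]
      rcases Nat.lt_trichotomy (n+1) s with hlt | heqs | hgt
      · rw [if_neg (by omega : ¬ n + 1 = s)]
        rcases Nat.eq_or_lt_of_le (by omega : 1 ≤ n + 1) with h1 | h1
        · -- n + 1 = 1
          have hn0 : n = 0 := by omega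
          subst hn0
          rw [if_pos rfl, hμ1, hμ0]
          push_cast [Nat.cast_sub he1]
          ring
        · -- 2 ≤ n + 1 < s
          rw [if_neg (by omega : ¬ n + 1 = 1)]
          have hv1 : μ (n+1) = e - 1 := hμval_lt (n+1) (by omega) hlt
          have hv2 : μ n = e - 1 := hμval_lt n (by omega) (by omega)
          rw [hv1, hv2]
          push_cast
          ring
      · -- n + 1 = s
        rw [if_pos heqs, if_neg (by omega : ¬ n + 1 = 1)]
        have hv1 : μ (n+1) = e := hμval_ge (n+1) (by omega)
        have hv2 : μ n = e - 1 := hμval_lt n (by omega) (by omega)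
        rw [hv1, hv2]
        push_cast [Nat.cast_sub he1]
        ring
      · -- n + 1 > s
        rw [if_neg (by omega : ¬ n + 1 = s), if_neg (by omega : ¬ n + 1 = 1)]
        have hv1 : μ (n+1) = e := hμval_ge (n+1) (by omega)
        have hv2 : μ n = e := hμval_ge n (by omega)
        rw [hv1, hv2]
        push_cast
        ring
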